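/- Let n be a real number. Define G(x) = 2e^{x−1} − 2x for x ∈ ℝ, and let φ : ℝ → ℝ be the unique differentiable function with φ(t) < 1 for all t, φ(0) = 0, and φ′(t) = −√(G(φ(t))) for all t ∈ ℝ. Define R(t) = −2(e^{φ(t)−1} − 1)/φ′(t) + 2 − n (note φ′(t) < 0 for all t, so R is well defined). Then lim_{t→−∞} R(t) = −n. -/

import Mathlib

open Real Filter Set Topology

/-- The key 0/0 limit: 2(e^u - 1 - u) / (e^u - 1)^2 → 1 as u → 0⁻, by L'Hôpital. -/
lemma aux_lhopital :
    Tendsto (fun u : ℝ => (2 * (Real.exp u - 1 - u)) / ((Real.exp u - 1) ^ 2))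
      (𝓝[<] (0 : ℝ)) (𝓝 1) := by
  have hne : ∀ᶠ u in 𝓝[<] (0 : ℝ), u < 0 := eventually_mem_nhdsWithin
  apply HasDerivAt.lhopital_zero_nhdsLT
      (f' := fun u => 2 * (Real.exp u - 1)) (g' := fun u => 2 * (Real.exp u - 1) * Real.exp u)
  · filter_upwards with u
    have h1 : HasDerivAt (fun u : ℝ => Real.exp u - 1 - u) (Real.exp u - 1) u := by
      exact ((Real.hasDerivAt_exp u).sub_const 1).sub (hasDerivAt_id u)
    exact h1.const_mul 2
  · filter_upwards with u
    have h1 : HasDerivAt (fun u : ℝ => (Real.exp u - 1) ^ 2)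
        ((2 : ℕ) * (Real.exp u - 1) ^ 1 * Real.exp u) u :=
      ((Real.hasDerivAt_exp u).sub_const 1).pow 2
    convert h1 using 1
    push_cast
    ring
  · filter_upwards [hne] with u hu
    have : Real.exp u < 1 := Real.exp_lt_one_iff.mpr hu
    have h0 : Real.exp u - 1 < 0 := by linarith
    have h2 : 0 < Real.exp u := Real.exp_pos u
    nlinarith
  · have h : ContinuousAt (fun u : ℝ => 2 * (Real.exp u - 1 - u)) 0 := by fun_prop
    have h2 := (h.continuousWithinAt (s := Set.Iio 0)).tendsto
    simpa using h2
  · have h : ContinuousAt (fun u : ℝ => (Real.exp u - 1) ^ 2) 0 := by fun_prop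
    have h2 := (h.continuousWithinAt (s := Set.Iio 0)).tendsto
    simpa using h2
  · have key : (fun u : ℝ => Real.exp (-u)) =ᶠ[𝓝[<] (0 : ℝ)]
        (fun u => 2 * (Real.exp u - 1) / (2 * (Real.exp u - 1) * Real.exp u)) := by
      filter_upwards [hne] with u hu
      have h1 : Real.exp u < 1 := Real.exp_lt_one_iff.mpr hu
      have h0 : Real.exp u - 1 ≠ 0 := by linarith
      have h2 : Real.exp u ≠ 0 := (Real.exp_pos u).ne'
      rw [Real.exp_neg]
      field_simp
    refine Tendsto.congr' key ?_
    have h : ContinuousAt (fun u : ℝ => Real.exp (-u)) 0 := by fun_prop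
    simpa using (h.continuousWithinAt (s := Set.Iio 0)).tendsto

/-- (e^(x-1) - 1) / (-√(2e^(x-1) - 2x)) → 1 as x → 1⁻. -/
lemma aux_F :
    Tendsto (fun x : ℝ => (Real.exp (x - 1) - 1) / (-Real.sqrt (2 * Real.exp (x - 1) - 2 * x)))
      (𝓝[<] (1 : ℝ)) (𝓝 1) := by
  have hmap : Tendsto (fun x : ℝ => x - 1) (𝓝[<] (1 : ℝ)) (𝓝[<] (0 : ℝ)) := by
    refine tendsto_nhdsWithin_of_tendsto_nhds_of_eventually_within _ ?_ ?_
    · have h : ContinuousAt (fun x : ℝ => x - 1) 1 := by fun_prop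
      simpa using (h.continuousWithinAt (s := Set.Iio 1)).tendsto
    · filter_upwards [eventually_mem_nhdsWithin] with x (hx : x < 1)
      simp only [Set.mem_Iio]
      linarith
  have hinv : Tendsto (fun u : ℝ => ((Real.exp u - 1) ^ 2) / (2 * (Real.exp u - 1 - u)))
      (𝓝[<] (0 : ℝ)) (𝓝 1) := by
    have h := (aux_lhopital.inv₀ (by norm_num)).congr (fun u => by rw [inv_div])
    simpa using h
  have hsq : Tendsto (fun u : ℝ => Real.sqrt (((Real.exp u - 1) ^ 2) / (2 * (Real.exp u - 1 - u))))
      (𝓝[<] (0 : ℝ)) (𝓝 1) := by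
    have h := (Real.continuous_sqrt.continuousAt (x := (1:ℝ))).tendsto.comp hinv
    simpa [Function.comp_def] using h
  have hcomp := hsq.comp hmap
  refine Tendsto.congr' ?_ hcomp
  filter_upwards [eventually_mem_nhdsWithin] with x (hx : x < 1)
  have hu : x - 1 < 0 := by linarith
  have hexp : Real.exp (x - 1) < 1 := Real.exp_lt_one_iff.mpr hu
  have hJ : 0 < 2 * (Real.exp (x - 1) - 1 - (x - 1)) := by
    have := Real.add_one_lt_exp (x := x - 1) (ne_of_lt hu)
    linarith
  have hGx : 2 * Real.exp (x - 1) - 2 * x = 2 * (Real.exp (x - 1) - 1 - (x - 1)) := by ring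
  have hs : 0 < Real.sqrt (2 * (Real.exp (x - 1) - 1 - (x - 1))) := Real.sqrt_pos.mpr hJ
  show Real.sqrt (((Real.exp (x - 1) - 1) ^ 2) / (2 * (Real.exp (x - 1) - 1 - (x - 1))))
      = (Real.exp (x - 1) - 1) / (-Real.sqrt (2 * Real.exp (x - 1) - 2 * x))
  rw [hGx, Real.sqrt_div (sq_nonneg _), Real.sqrt_sq_eq_abs,
    abs_of_neg (by linarith : Real.exp (x - 1) - 1 < 0)]
  rw [div_neg, ← neg_div]

lemma aux_Gpos {G : ℝ → ℝ} (hG : ∀ x, G x = 2 * Real.exp (x - 1) - 2 * x)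
    {x : ℝ} (hx : x < 1) : 0 < G x := by
  rw [hG]
  have := Real.add_one_lt_exp (x := x - 1) (by intro h; linarith [sub_eq_zero.mp h])
  linarith

lemma aux_Ganti {G : ℝ → ℝ} (hG : ∀ x, G x = 2 * Real.exp (x - 1) - 2 * x) :
    AntitoneOn G (Set.Iic 1) := by
  intro x hx y hy hxy
  simp only [Set.mem_Iic] at hx hy
  rw [hG, hG]
  have h1 : Real.exp (y - 1) ≤ 1 := Real.exp_le_one_iff.mpr (by linarith)
  have h2 : x - y + 1 ≤ Real.exp (x - y) := by linarith [Real.add_one_le_exp (x - y)]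
  have h3 : Real.exp (y - 1) * Real.exp (x - y) = Real.exp (x - 1) := by
    rw [← Real.exp_add]; ring_nf
  have h4 : (0:ℝ) < Real.exp (x - y) := Real.exp_pos _
  have h5 : (0:ℝ) < Real.exp (y - 1) := Real.exp_pos _
  nlinarith [mul_le_mul_of_nonneg_left h2 h5.le]

theorem stmt_19 (n : ℝ) (G : ℝ → ℝ) (hG : ∀ x, G x = 2 * Real.exp (x - 1) - 2 * x)
    (φ : ℝ → ℝ) (hφ1 : ∀ t, φ t < 1) (hφ0 : φ 0 = 0)
    (hφd : ∀ t, HasDerivAt φ (-Real.sqrt (G (φ t))) t)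
    (R : ℝ → ℝ)
    (hR : ∀ t, R t = -2 * (Real.exp (φ t - 1) - 1) / deriv φ t + 2 - n) :
    Filter.Tendsto R Filter.atBot (𝓝 (-n)) := by
  have hderiv : ∀ t, deriv φ t = -Real.sqrt (G (φ t)) := fun t => (hφd t).deriv
  have hsp : ∀ t, 0 < Real.sqrt (G (φ t)) :=
    fun t => Real.sqrt_pos.mpr (aux_Gpos hG (hφ1 t))
  have hanti : StrictAnti φ := strictAnti_of_deriv_neg fun t => by
    rw [hderiv t]; linarith [hsp t]
  have hcont : Continuous φ :=
    continuous_iff_continuousAt.mpr fun t => (hφd t).differentiableAt.continuousAt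
  -- φ → 1 as t → -∞, within Iio 1
  have hφlim : Tendsto φ atBot (𝓝[<] (1:ℝ)) := by
    rw [tendsto_nhdsWithin_iff]
    refine ⟨tendsto_order.mpr ⟨?_, fun a ha => Eventually.of_forall
      fun t => lt_trans (hφ1 t) ha⟩, Eventually.of_forall fun t => hφ1 t⟩
    intro a ha
    set b : ℝ := max a 0 with hbdef
    have hb1 : b < 1 := max_lt ha one_pos
    have hc : 0 < Real.sqrt (G b) := Real.sqrt_pos.mpr (aux_Gpos hG hb1)
    set c : ℝ := Real.sqrt (G b) with hcdef
    refine eventually_atBot.mpr ⟨-(1/c) - 1, fun t ht => ?_⟩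
    have htneg : t < 0 := by
      have : 0 < 1/c := by positivity
      linarith
    by_contra hle
    push_neg at hle
    have hφtb : φ t ≤ b := le_trans hle (le_max_left a 0)
    obtain ⟨ξ, hξ, heq⟩ := exists_hasDerivAt_eq_slope φ (fun s => -Real.sqrt (G (φ s)))
      htneg hcont.continuousOn (fun x _ => hφd x)
    have hφξ : φ ξ ≤ b := le_trans (hanti hξ.1).le hφtb
    have hGξ : G b ≤ G (φ ξ) :=
      aux_Ganti hG (Set.mem_Iic.mpr (hφξ.trans hb1.le)) (Set.mem_Iic.mpr hb1.le) hφξ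
    have hsqle : c ≤ Real.sqrt (G (φ ξ)) := by
      rw [hcdef]; exact Real.sqrt_le_sqrt hGξ
    have heq2 : -Real.sqrt (G (φ ξ)) = φ t / t := by
      rw [heq, hφ0]
      rw [zero_sub, zero_sub, neg_div_neg_eq]
    have h1 : φ t / t ≤ -c := by rw [← heq2]; linarith
    have h2 : -c * t ≤ φ t := by
      have := mul_le_mul_of_nonpos_right h1 htneg.le
      calc -c * t = (-c) * t := by ring
        _ ≤ (φ t / t) * t := by nlinarith
        _ = φ t := div_mul_cancel₀ _ htneg.ne
    have h3 : 1 + c ≤ -c * t := by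
      have : -t ≥ 1/c + 1 := by linarith
      have hcalc : -c * t = c * (-t) := by ring
      rw [hcalc]
      calc 1 + c = c * (1/c + 1) := by field_simp
        _ ≤ c * (-t) := by nlinarith
    linarith [hφ1 t, h2, h3, hc]
  -- compose with aux_F
  have hF : Tendsto (fun t => (Real.exp (φ t - 1) - 1) /
      (-Real.sqrt (2 * Real.exp (φ t - 1) - 2 * φ t))) atBot (𝓝 1) :=
    aux_F.comp hφlim
  have hmain : Tendsto (fun t => -2 * ((Real.exp (φ t - 1) - 1) /
      (-Real.sqrt (2 * Real.exp (φ t - 1) - 2 * φ t))) + 2 - n) atBot (𝓝 (-2 * 1 + 2 - n)) :=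
    ((hF.const_mul (-2)).add_const 2).sub_const n
  have hval : -2 * 1 + 2 - n = -n := by ring
  rw [hval] at hmain
  refine Tendsto.congr (fun t => ?_) hmain
  rw [hR t, hderiv t, hG (φ t), mul_div_assoc]
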